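/- Suppose F, L_1,…,L_J are convex on the compact convex set X, the Slater point x̃ ∈ X satisfies max_j L_j(x̃) + σ₀ ≤ 0 with σ₀ > 0, and 0 ≤ θ ≤ σ₀/2 so that strong duality holds for the tightened problem (P_θ). Then any optimal dual variable λ^θ ≥ 0 of (P_θ) satisfies Σ_{j=1}^J λ_j^θ ≤ (F(x̃) − F(x^θ))/(σ₀ − θ), and moreover F(x*) ≤ F(x^θ) ≤ F(x*) + θ Σ_{j=1}^J λ_j^θ, where x* is a minimizer of the original problem (P). -/

import Mathlib

open scoped BigOperators

noncomputable section

open scoped BigOperators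
open Set

set_option maxHeartbeats 1000000 in
/-- A convex function on a compact convex nonempty set in a finite-dimensional
normed space is bounded below on that set. -/
lemma bddBelow_image_of_convexOn {E : Type*} [NormedAddCommGroup E] [NormedSpace ℝ E]
    [FiniteDimensional ℝ E] {X : Set E} (hXconv : Convex ℝ X) (hXcompact : IsCompact X)
    (hXne : X.Nonempty) {g : E → ℝ} (hg : ConvexOn ℝ X g) : BddBelow (g '' X) := by
  classical
  -- affinely independent subset of X spanning the same affine span
  obtain ⟨t, htX, htspan, htind⟩ := exists_affineIndependent ℝ E X
  -- extend to an affine basis of E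
  obtain ⟨u, htu, huind, huspan⟩ := exists_subset_affineIndependent_affineSpan_eq_top htind
  haveI : Finite ↥u := finite_set_of_fin_dim_affineIndependent ℝ huind
  haveI : Fintype ↥u := Fintype.ofFinite ↥u
  let b : AffineBasis ↥u ℝ E := ⟨(↑), huind, by rw [Subtype.range_coe]; exact huspan⟩
  have hb : ∀ i : ↥u, b i = (i : E) := fun i => rfl
  -- the finset of indices corresponding to t
  let T : Finset ↥u := Finset.univ.filter (fun i => (i : E) ∈ t)
  have hTmem : ∀ i : ↥u, i ∈ T ↔ (i : E) ∈ t := by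
    intro i; simp [T]
  -- T is nonempty
  obtain ⟨x₀, hx₀⟩ := id hXne
  have htne : t.Nonempty := by
    by_contra h
    rw [Set.not_nonempty_iff_eq_empty] at h
    have : x₀ ∈ affineSpan ℝ t := htspan ▸ subset_affineSpan ℝ X hx₀
    rw [h, AffineSubspace.span_empty] at this
    exact AffineSubspace.notMem_bot ℝ E x₀ this
  have hTne : T.Nonempty := by
    obtain ⟨x, hx⟩ := htne
    exact ⟨⟨x, htu hx⟩, (hTmem _).2 hx⟩
  set m : ℕ := T.card with hm
  have hm0 : 0 < (m : ℝ) := by exact_mod_cast Finset.card_pos.2 hTne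
  -- coordinates of points in the affine span of t vanish outside T
  have hcoord0 : ∀ i : ↥u, i ∉ T → ∀ z ∈ affineSpan ℝ t, b.coord i z = 0 := by
    intro i hi z hz
    have hle : affineSpan ℝ t ≤
        AffineSubspace.comap (b.coord i) (AffineSubspace.mk' (0 : ℝ) ⊥) := by
      refine affineSpan_le.mpr ?_
      intro x hx
      have hxu : x ∈ u := htu hx
      have hij : i ≠ ⟨x, hxu⟩ := by
        intro h; apply hi; rw [h]; exact (hTmem _).2 hx
      have : b.coord i (b ⟨x, hxu⟩) = 0 := by
        rw [b.coord_apply]; simp [hij]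
      simp only [SetLike.mem_coe, AffineSubspace.mem_comap]
      rw [hb] at this
      rw [this]
      exact AffineSubspace.self_mem_mk' _ _
    have := hle hz
    simp only [AffineSubspace.mem_comap] at this
    rcases (AffineSubspace.mem_mk').1 this with h
    simpa using h
  -- a uniform bound on the coordinates over X
  have hcont : ContinuousOn (fun z => ∑ i : ↥u, |b.coord i z|) X :=
    (continuous_finset_sum _ fun i _ =>
      ((b.coord i).continuous_of_finiteDimensional).abs).continuousOn
  obtain ⟨z₀, _, hz₀⟩ := hXcompact.exists_isMaxOn hXne hcont
  set B : ℝ := ∑ i : ↥u, |b.coord i z₀| with hB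
  have hB0 : 0 ≤ B := Finset.sum_nonneg fun i _ => abs_nonneg _
  have hcoordB : ∀ z ∈ X, ∀ i : ↥u, |b.coord i z| ≤ B := by
    intro z hz i
    calc |b.coord i z| ≤ ∑ j : ↥u, |b.coord j z| :=
          Finset.single_le_sum (f := fun j => |b.coord j z|) (fun j _ => abs_nonneg _) (Finset.mem_univ i)
      _ ≤ B := hz₀ hz
  -- the scaling parameter
  set s : ℝ := ((m : ℝ) * (B + 1))⁻¹ with hs
  have hs0 : 0 < s := inv_pos.2 (mul_pos hm0 (by linarith))
  have hsB : s * B ≤ (m : ℝ)⁻¹ := by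
    rw [hs]
    rw [mul_inv, mul_assoc]
    have h1 : (B + 1)⁻¹ * B ≤ 1 := by
      rw [inv_mul_le_iff₀ (by linarith)]; linarith
    calc (m : ℝ)⁻¹ * ((B + 1)⁻¹ * B) ≤ (m : ℝ)⁻¹ * 1 := by
          apply mul_le_mul_of_nonneg_left h1 (inv_nonneg.2 hm0.le)
      _ = (m : ℝ)⁻¹ := mul_one _
  -- the reference point: uniform combination of the points of t
  set μ : ↥u → ℝ := fun i => if i ∈ T then (m : ℝ)⁻¹ else 0 with hμ
  have hμsum : ∑ i : ↥u, μ i = 1 := by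
    rw [hμ, Finset.sum_ite_mem, Finset.univ_inter, Finset.sum_const, nsmul_eq_mul]
    exact mul_inv_cancel₀ hm0.ne'
  set p : E := Finset.univ.affineCombination ℝ b μ with hp
  have hcoordp : ∀ i : ↥u, b.coord i p = μ i := fun i =>
    b.coord_apply_combination_of_mem (Finset.mem_univ i) hμsum
  -- the main estimate
  set M : ℝ := T.sup' hTne (fun i => g (b i)) with hM
  refine ⟨(g p - (1 + s)⁻¹ * M) / (s / (1 + s)), ?_⟩
  rintro y ⟨z, hzX, rfl⟩
  -- w := lineMap z p (1+s)
  set w : E := AffineMap.lineMap z p (1 + s) with hw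
  set ν : ↥u → ℝ := fun i => b.coord i w with hν
  have hνsum : ∑ i : ↥u, ν i = 1 := b.sum_coord_apply_eq_one w
  have hνval : ∀ i : ↥u, ν i = (1 + s) * μ i - s * b.coord i z := by
    intro i
    have h1 : b.coord i w = AffineMap.lineMap (b.coord i z) (b.coord i p) (1 + s) := by
      rw [hw, (b.coord i).apply_lineMap]
    simp only [hν]
    rw [h1, AffineMap.lineMap_apply_module, hcoordp]
    simp only [smul_eq_mul]
    ring
  have hzspan : z ∈ affineSpan ℝ t := htspan ▸ subset_affineSpan ℝ X hzX
  have hν0 : ∀ i : ↥u, i ∉ T → ν i = 0 := by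
    intro i hi
    rw [hνval i, hμ]
    simp only [hi, if_false, mul_zero, zero_sub]
    rw [hcoord0 i hi z hzspan]
    ring
  have hνnonneg : ∀ i ∈ T, 0 ≤ ν i := by
    intro i hi
    rw [hνval i, hμ]
    simp only [hi, if_true]
    have h1 : s * b.coord i z ≤ s * B :=
      mul_le_mul_of_nonneg_left ((le_abs_self _).trans (hcoordB z hzX i)) hs0.le
    have h2 : s * B ≤ (m : ℝ)⁻¹ := hsB
    have h3 : (m : ℝ)⁻¹ ≤ (1 + s) * (m : ℝ)⁻¹ := by
      nlinarith [inv_pos.2 hm0]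
    linarith
  have hνTsum : ∑ i ∈ T, ν i = 1 := by
    rw [← hνsum]
    exact Finset.sum_subset (Finset.subset_univ T) (fun i _ hi => hν0 i hi)
  -- w as affine combination over T
  have hwT : w = T.affineCombination ℝ b ν := by
    have hind : Set.indicator (↑T) ν = ν := by
      funext i
      by_cases hi : i ∈ T
      · simp [Set.indicator_apply, hi]
      · simp [Set.indicator_apply, hi, hν0 i hi]
    calc w = Finset.univ.affineCombination ℝ b ν := (b.affineCombination_coord_eq_self w).symm
      _ = T.affineCombination ℝ b ν := by
          rw [Finset.affineCombination_indicator_subset ν b (Finset.subset_univ T), hind]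
  have hwsum : w = ∑ i ∈ T, ν i • b i := by
    rw [hwT]
    exact Finset.affineCombination_eq_linear_combination _ _ _ hνTsum
  have hbX : ∀ i ∈ T, b i ∈ X := fun i hi => htX ((hTmem i).1 hi)
  have hwX : w ∈ X := by
    rw [hwsum]
    exact hXconv.sum_mem hνnonneg hνTsum hbX
  have hgw : g w ≤ M := by
    have := hg.map_sum_le hνnonneg hνTsum hbX
    rw [← hwsum] at this
    refine this.trans ?_
    calc ∑ i ∈ T, ν i * g (b i) ≤ ∑ i ∈ T, ν i * M := by
          refine Finset.sum_le_sum fun i hi => ?_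
          refine mul_le_mul_of_nonneg_left ?_ (hνnonneg i hi)
          rw [hM]
          exact Finset.le_sup' (fun j => g (b j)) hi
      _ = M := by rw [← Finset.sum_mul, hνTsum, one_mul]
  -- p is the convex combination of z and w
  have h1s : (1 : ℝ) + s ≠ 0 := by intro h; rw [← h] at hs0; linarith
  have hw2 : w = (1 + s) • p - s • z := by
    rw [hw, AffineMap.lineMap_apply_module]; module
  have hpzw : (s / (1 + s)) • z + (1 + s)⁻¹ • w = p := by
    have hco : s / (1 + s) = (1 + s)⁻¹ * s := by ring
    rw [hw2, smul_sub, smul_smul, smul_smul, inv_mul_cancel₀ h1s, one_smul, hco]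
    abel
  have ha0 : (0:ℝ) ≤ s / (1 + s) := div_nonneg hs0.le (by linarith)
  have hb0 : (0:ℝ) ≤ (1 + s)⁻¹ := inv_nonneg.2 (by linarith)
  have hab : s / (1 + s) + (1 + s)⁻¹ = 1 := by
    field_simp
    ring
  have hcvx := hg.2 hzX hwX ha0 hb0 hab
  rw [hpzw] at hcvx
  -- conclude
  have hkey : g p - (1 + s)⁻¹ * M ≤ (s / (1 + s)) * g z := by
    have h2 : (1 + s)⁻¹ * g w ≤ (1 + s)⁻¹ * M :=
      mul_le_mul_of_nonneg_left hgw hb0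
    simp only [smul_eq_mul] at hcvx
    linarith
  have hpos : (0:ℝ) < s / (1 + s) := div_pos hs0 (by linarith)
  rw [div_le_iff₀ hpos]
  nlinarith [hkey]


/-- proof of Lemma 2: under convexity, the Slater condition
`max_j L_j(x̃) + σ₀ ≤ 0`, `0 ≤ θ ≤ σ₀/2` and strong duality for the tightened problem (P_θ),
any optimal dual variable `λ^θ ≥ 0` of (P_θ) satisfies
`Σ_j λ_j^θ ≤ (F(x̃) − F(x^θ))/(σ₀ − θ)`, and moreover
`F(x*) ≤ F(x^θ) ≤ F(x*) + θ Σ_j λ_j^θ`. -/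
theorem tightened_problem_dual_sum_bound
    {n J : ℕ}
    -- compact convex feasible set
    (X : Set (EuclideanSpace ℝ (Fin n)))
    (hXconv : Convex ℝ X) (hXcompact : IsCompact X) (hXne : X.Nonempty)
    -- convex objective and constraints
    (F : EuclideanSpace ℝ (Fin n) → ℝ) (L : Fin J → EuclideanSpace ℝ (Fin n) → ℝ)
    (hFconv : ConvexOn ℝ X F) (hLconv : ∀ j, ConvexOn ℝ X (L j))
    -- Slater point
    (xtil : EuclideanSpace ℝ (Fin n)) (hxtilX : xtil ∈ X)
    (σ₀ : ℝ) (hσ₀ : 0 < σ₀) (hSlater : ∀ j, L j xtil + σ₀ ≤ 0)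
    -- the tightening parameter
    (θ : ℝ) (hθ : 0 ≤ θ) (hθ' : θ ≤ σ₀ / 2)
    -- `x*` is optimal for the original problem (P)
    (xstar : EuclideanSpace ℝ (Fin n))
    (hxstarX : xstar ∈ X) (hxstarFeas : ∀ j, L j xstar ≤ 0)
    (hxstarOpt : ∀ z ∈ X, (∀ j, L j z ≤ 0) → F xstar ≤ F z)
    -- `x^θ` is optimal for the tightened problem (P_θ)
    (xθ : EuclideanSpace ℝ (Fin n))
    (hxθX : xθ ∈ X) (hxθFeas : ∀ j, L j xθ + θ ≤ 0)
    (hxθOpt : ∀ z ∈ X, (∀ j, L j z + θ ≤ 0) → F xθ ≤ F z)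
    -- `λ^θ ≥ 0` is optimal for the dual of (P_θ)
    (lamθ : Fin J → ℝ) (hlamθ_nonneg : ∀ j, 0 ≤ lamθ j)
    (hlamθ_opt : ∀ lam : Fin J → ℝ, (∀ j, 0 ≤ lam j) →
      sInf ((fun z => F z + ∑ j, lam j * (L j z + θ)) '' X)
        ≤ sInf ((fun z => F z + ∑ j, lamθ j * (L j z + θ)) '' X))
    -- strong duality for (P_θ)
    (hStrongDuality : sInf ((fun z => F z + ∑ j, lamθ j * (L j z + θ)) '' X) = F xθ) :
    (∑ j, lamθ j ≤ (F xtil - F xθ) / (σ₀ - θ))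
      ∧ F xstar ≤ F xθ ∧ F xθ ≤ F xstar + θ * ∑ j, lamθ j := by
  classical
  set g : EuclideanSpace ℝ (Fin n) → ℝ := fun z => F z + ∑ j, lamθ j * (L j z + θ) with hg
  have hgconv : ConvexOn ℝ X g := by
    have hsum : ConvexOn ℝ X (fun z => ∑ j, lamθ j * (L j z + θ)) := by
      have : ∀ (S : Finset (Fin J)), ConvexOn ℝ X (fun z => ∑ j ∈ S, lamθ j * (L j z + θ)) := by
        intro S
        induction S using Finset.induction with
        | empty => simpa using convexOn_const (0:ℝ) hXconv
        | @insert a Sf hj ih =>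
          have hterm : ConvexOn ℝ X (fun z => lamθ a * (L a z + θ)) := by
            have h1 : ConvexOn ℝ X (fun z => L a z + θ) :=
              (hLconv a).add (convexOn_const θ hXconv)
            simpa [smul_eq_mul] using h1.smul (hlamθ_nonneg a)
          have := hterm.add ih
          rw [show (fun z => ∑ j ∈ insert a Sf, lamθ j * (L j z + θ)) = (fun z => lamθ a * (L a z + θ)) + (fun z => ∑ j ∈ Sf, lamθ j * (L j z + θ)) from by funext z; simp [Finset.sum_insert hj]]
          exact this
      exact this Finset.univ
    exact hFconv.add hsum
  have hbdd : BddBelow (g '' X) := bddBelow_image_of_convexOn hXconv hXcompact hXne hgconv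
  have hkey : ∀ x ∈ X, F xθ ≤ g x := by
    intro x hx
    rw [← hStrongDuality]
    exact csInf_le hbdd ⟨x, hx, rfl⟩
  have hσθ : 0 < σ₀ - θ := by linarith
  -- Part 1
  have h1 : ∑ j, lamθ j ≤ (F xtil - F xθ) / (σ₀ - θ) := by
    have hA := hkey xtil hxtilX
    have hB : ∑ j, lamθ j * (L j xtil + θ) ≤ ∑ j, lamθ j * (θ - σ₀) := by
      refine Finset.sum_le_sum fun j _ => ?_
      exact mul_le_mul_of_nonneg_left (by linarith [hSlater j]) (hlamθ_nonneg j)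
    rw [← Finset.sum_mul] at hB
    rw [le_div_iff₀ hσθ]
    have : F xθ ≤ F xtil + (∑ j, lamθ j) * (θ - σ₀) := by
      calc F xθ ≤ g xtil := hA
        _ = F xtil + ∑ j, lamθ j * (L j xtil + θ) := rfl
        _ ≤ F xtil + (∑ j, lamθ j) * (θ - σ₀) := by linarith
    nlinarith [this]
  -- Part 2
  have h2 : F xstar ≤ F xθ :=
    hxstarOpt xθ hxθX (fun j => by linarith [hxθFeas j])
  -- Part 3
  have h3 : F xθ ≤ F xstar + θ * ∑ j, lamθ j := by
    have hA := hkey xstar hxstarX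
    have hB : ∑ j, lamθ j * (L j xstar + θ) ≤ ∑ j, lamθ j * θ := by
      refine Finset.sum_le_sum fun j _ => ?_
      exact mul_le_mul_of_nonneg_left (by linarith [hxstarFeas j]) (hlamθ_nonneg j)
    have hC : ∑ j, lamθ j * θ = θ * ∑ j, lamθ j := by
      rw [Finset.mul_sum]
      exact Finset.sum_congr rfl fun j _ => mul_comm _ _
    calc F xθ ≤ g xstar := hA
      _ = F xstar + ∑ j, lamθ j * (L j xstar + θ) := rfl
      _ ≤ F xstar + θ * ∑ j, lamθ j := by linarith [hB, hC.ge, hC.le]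
  exact ⟨h1, h2, h3⟩


end
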